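/- Let p_n denote the n-th prime and P_m = ∏_{i=1}^{m} p_i the m-th primorial. Let A > 0 be a real number and suppose P_l ≥ A·(p_l² − p_l) for some l ≥ 1. Then P_m ≥ A·(p_m² − p_m) for all m ≥ l. -/

import Mathlib

lemma nth_prime_zero' : Nat.nth Nat.Prime 0 = 2 := by
  have hc : Nat.count Nat.Prime 2 = 0 := by decide
  have h := Nat.nth_count Nat.prime_two
  rwa [hc] at h

lemma nth_prime_one' : Nat.nth Nat.Prime 1 = 3 := by
  have hc : Nat.count Nat.Prime 3 = 1 := by decide
  have h := Nat.nth_count Nat.prime_three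
  rwa [hc] at h

lemma nth_prime_two_le (n : ℕ) : 2 ≤ Nat.nth Nat.Prime n :=
  (Nat.nth_mem_of_infinite Nat.infinite_setOf_prime n).two_le

lemma nth_prime_succ_le (m : ℕ) : Nat.nth Nat.Prime (m+1) ≤ 2 * Nat.nth Nat.Prime m := by
  obtain ⟨q, hq, hlt, hle⟩ := Nat.exists_prime_lt_and_le_two_mul (Nat.nth Nat.Prime m)
    (by have := nth_prime_two_le m; omega)
  refine le_trans ?_ hle
  by_contra hc
  push_neg at hc
  have hk := Nat.nth_count hq
  set k := Nat.count Nat.Prime q with hkdef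
  have h1 : Nat.nth Nat.Prime m < Nat.nth Nat.Prime k := by rw [hk]; exact hlt
  have h2 : Nat.nth Nat.Prime k < Nat.nth Nat.Prime (m+1) := by rw [hk]; exact hc
  have hmk : m < k := (Nat.nth_lt_nth Nat.infinite_setOf_prime).mp h1
  have hkm : k < m+1 := (Nat.nth_lt_nth Nat.infinite_setOf_prime).mp h2
  omega

lemma nth_prime_succ_bound (m : ℕ) :
    Nat.nth Nat.Prime (m+1) ≤ Nat.nth Nat.Prime m * Nat.nth Nat.Prime m - Nat.nth Nat.Prime m + 1 := by
  cases m with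
  | zero => rw [nth_prime_one', nth_prime_zero']
  | succ n =>
    have h3 : 3 ≤ Nat.nth Nat.Prime (n+1) := by
      have := (Nat.nth_lt_nth (p := Nat.Prime) Nat.infinite_setOf_prime
        (k := 0) (n := n+1)).mpr (by omega)
      rw [nth_prime_zero'] at this; omega
    have h2 := nth_prime_succ_le (n+1)
    set p := Nat.nth Nat.Prime (n+1)
    have hsq : 3 * p ≤ p * p := Nat.mul_le_mul_right p h3
    omega

/-- The primorial `P m = p₁ ⋯ p_m`, where `p_i = Nat.nth Nat.Prime (i - 1)`. -/
noncomputable def primorial' (m : ℕ) : ℕ := ∏ i ∈ Finset.range m, Nat.nth Nat.Prime i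

theorem primorial_stays_above_threshold (A : ℝ) (hA : 0 < A) (l : ℕ) (hl : 1 ≤ l)
    (h : (primorial' l : ℝ) ≥
      A * ((Nat.nth Nat.Prime (l - 1) : ℝ) ^ 2 - (Nat.nth Nat.Prime (l - 1) : ℝ))) :
    ∀ m, l ≤ m → (primorial' m : ℝ) ≥
      A * ((Nat.nth Nat.Prime (m - 1) : ℝ) ^ 2 - (Nat.nth Nat.Prime (m - 1) : ℝ)) := by
  intro m hm
  induction m, hm using Nat.le_induction with
  | base => exact h
  | succ m hm ih =>
    have hm1 : 1 ≤ m := le_trans hl hm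
    set a := Nat.nth Nat.Prime (m - 1) with ha
    set b := Nat.nth Nat.Prime m with hb
    have hprod : primorial' (m+1) = primorial' m * b := by
      rw [primorial', Finset.prod_range_succ]; rfl
    have hbles : b ≤ a * a - a + 1 := by
      have := nth_prime_succ_bound (m - 1)
      rwa [Nat.sub_add_cancel hm1] at this
    have ha2 : 2 ≤ a := nth_prime_two_le _
    have hb2 : 2 ≤ b := nth_prime_two_le _
    have haa : a ≤ a * a := Nat.le_mul_of_pos_left a (by omega)
    have hblesR : (b : ℝ) ≤ (a : ℝ) ^ 2 - (a : ℝ) + 1 := by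
      have : (b : ℝ) ≤ ((a * a - a + 1 : ℕ) : ℝ) := by exact_mod_cast hbles
      rw [Nat.cast_add, Nat.cast_sub haa, Nat.cast_mul] at this
      push_cast at this ⊢
      nlinarith [this]
    have ha2R : (2 : ℝ) ≤ (a : ℝ) := by exact_mod_cast ha2
    have hb2R : (2 : ℝ) ≤ (b : ℝ) := by exact_mod_cast hb2
    have hPa : (primorial' m : ℝ) ≥ A * ((a : ℝ) ^ 2 - (a : ℝ)) := ih
    have hgoal : ((primorial' (m+1) : ℕ) : ℝ) = (primorial' m : ℝ) * b := by
      rw [hprod]; push_cast; ring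
    have hm1' : m + 1 - 1 = m := by omega
    rw [hm1', hgoal]
    nlinarith [mul_nonneg (sub_nonneg.mpr hPa) (by linarith : (0:ℝ) ≤ (b:ℝ)),
      mul_nonneg (mul_nonneg hA.le (by linarith : (0:ℝ) ≤ (b:ℝ)))
        (by linarith : (0:ℝ) ≤ (a:ℝ)^2 - (a:ℝ) + 1 - (b:ℝ))]
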